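/- arXiv:1805.10083 — 2 statements merged into one kernel-verified Lean document; each statement's English description precedes it below -/
import Mathlib

section
/- Let T be a tree with order p and diameter d ≥ 2, and let ε = ε(T). Then the radio number of T satisfies rn(T) ≥ (p-1)(d+ε) - 2L(T) + ε. -/
namespace Radio

variable {V : Type*}

/-- The span of a labeling `f`: the maximum of `|f u - f v|` over all pairs of vertices. -/
def span [Fintype V] (f : V → ℕ) : ℕ :=
  Finset.univ.sup fun p : V × V => ((f p.1 : ℤ) - (f p.2 : ℤ)).natAbs

/-- `f` is a radio labeling of `G`: `|f u - f v| ≥ diam G + 1 - d(u,v)` for all distinct `u, v`. -/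
def IsRadioLabeling [Fintype V] (G : SimpleGraph V) (f : V → ℕ) : Prop :=
  ∀ u v : V, u ≠ v → G.diam + 1 ≤ G.dist u v + ((f u : ℤ) - (f v : ℤ)).natAbs

/-- The radio number of `G`: the minimum span of a radio labeling of `G`. -/
noncomputable def radioNumber [Fintype V] (G : SimpleGraph V) : ℕ :=
  sInf { n | ∃ f : V → ℕ, IsRadioLabeling G f ∧ span f = n }

/-- The weight of `G` from a vertex `v`: `w_G(v) = ∑_u d(u, v)`. -/
noncomputable def weightFrom [Fintype V] (G : SimpleGraph V) (v : V) : ℕ :=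
  ∑ u : V, G.dist u v

/-- The weight of `G`: the minimum of `w_G(v)` over all vertices `v`. -/
noncomputable def weight [Fintype V] (G : SimpleGraph V) : ℕ :=
  sInf (Set.range (weightFrom G))

/-- The set of weight centers of `G`: vertices minimizing `w_G(·)`. -/
def weightCenters [Fintype V] (G : SimpleGraph V) : Set V :=
  { v | ∀ x : V, weightFrom G v ≤ weightFrom G x }

/-- The level of a vertex `u`: `L(u) = min { d(u, x) : x ∈ W(G) }`. -/
noncomputable def level [Fintype V] (G : SimpleGraph V) (u : V) : ℕ :=
  sInf (G.dist u '' weightCenters G)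

/-- The total level of `G`: `L(G) = ∑_u L(u)`. -/
noncomputable def totalLevel [Fintype V] (G : SimpleGraph V) : ℕ :=
  ∑ u : V, level G u

/-- `ε(G) = 1` if `G` has exactly one weight center, and `0` otherwise
(for a tree the other case is exactly that of two adjacent weight centers). -/
noncomputable def epsilon [Fintype V] (G : SimpleGraph V) : ℕ :=
  if (weightCenters G).ncard = 1 then 1 else 0

/-- In a tree, distances to the endpoints of an edge differ by exactly one. -/
lemma dist_adj_diff (G : SimpleGraph V) (hT : G.IsTree) {a b : V} (hab : G.Adj a b) (y : V) :
    (G.dist y b : ℤ) = G.dist y a + 1 ∨ (G.dist y b : ℤ) = G.dist y a - 1 := by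
  classical
  have hc := hT.isConnected
  have h1 : G.dist a b = 1 := SimpleGraph.dist_eq_one_iff_adj.mpr hab
  have h2 : G.dist b a = 1 := SimpleGraph.dist_eq_one_iff_adj.mpr hab.symm
  have hub : G.dist y b ≤ G.dist y a + 1 := by
    have := hc.dist_triangle (u := y) (v := a) (w := b); omega
  have hua : G.dist y a ≤ G.dist y b + 1 := by
    have := hc.dist_triangle (u := y) (v := b) (w := a); omega
  have hne : G.dist y b ≠ G.dist y a := by
    intro heq
    obtain ⟨P, hP, hPl⟩ := hc.exists_path_of_dist y a
    by_cases hb : b ∈ P.support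
    · have hsplit := congrArg SimpleGraph.Walk.length (P.take_spec hb)
      rw [SimpleGraph.Walk.length_append] at hsplit
      have ht : G.dist y b ≤ (P.takeUntil b hb).length := SimpleGraph.dist_le _
      have hd : G.dist b a ≤ (P.dropUntil b hb).length := SimpleGraph.dist_le _
      omega
    · have hWp : ((SimpleGraph.Walk.cons hab.symm P.reverse).reverse).IsPath := by
        apply SimpleGraph.Walk.IsPath.reverse
        exact hP.reverse.cons (by simpa using hb)
      obtain ⟨Q, hQ, hQl⟩ := hc.exists_path_of_dist y b
      have huniq := (hT.existsUnique_path y b).unique hWp hQ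
      have := congrArg SimpleGraph.Walk.length huniq
      simp [SimpleGraph.Walk.length_reverse] at this
      omega
  omega

/-- In a tree, a vertex cannot have two distinct "descending" neighbors. -/
lemma unique_descent (G : SimpleGraph V) (hT : G.IsTree) {a b d : V}
    (hba : G.Adj b a) (hbd : G.Adj b d) (had : a ≠ d) (y : V)
    (h1 : G.dist y a < G.dist y b) (h2 : G.dist y d < G.dist y b) : False := by
  classical
  have hc := hT.isConnected
  have e1 := dist_adj_diff G hT hba y
  have e2 := dist_adj_diff G hT hbd y
  -- so dist y a = dist y b - 1 and dist y d = dist y b - 1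
  have ha' : G.dist y a + 1 = G.dist y b := by
    rcases e1 with h | h <;> omega
  have hd' : G.dist y d + 1 = G.dist y b := by
    rcases e2 with h | h <;> omega
  obtain ⟨P, hP, hPl⟩ := hc.exists_path_of_dist y a
  obtain ⟨Q, hQ, hQl⟩ := hc.exists_path_of_dist y d
  set W1 := (SimpleGraph.Walk.cons hba P.reverse).reverse with hW1
  set W2 := (SimpleGraph.Walk.cons hbd Q.reverse).reverse with hW2
  have hW1l : W1.length = G.dist y b := by
    simp [hW1, SimpleGraph.Walk.length_reverse, SimpleGraph.Walk.length_cons, hPl]; omega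
  have hW2l : W2.length = G.dist y b := by
    simp [hW2, SimpleGraph.Walk.length_reverse, SimpleGraph.Walk.length_cons, hQl]; omega
  have hW1p : W1.IsPath := W1.isPath_of_length_eq_dist hW1l
  have hW2p : W2.IsPath := W2.isPath_of_length_eq_dist hW2l
  have heq : W1 = W2 := (hT.existsUnique_path y b).unique hW1p hW2p
  have heq' : (SimpleGraph.Walk.cons hba P.reverse) = (SimpleGraph.Walk.cons hbd Q.reverse) := by
    have := congrArg SimpleGraph.Walk.reverse heq
    simpa [hW1, hW2, SimpleGraph.Walk.reverse_reverse] using this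
  have hsup := congrArg SimpleGraph.Walk.support heq'
  rw [SimpleGraph.Walk.support_cons, SimpleGraph.Walk.support_cons,
    P.reverse.support_eq_cons, Q.reverse.support_eq_cons] at hsup
  simp only [List.cons.injEq] at hsup
  exact had hsup.2.1

/-- Strict convexity step for the weight function along a path in a tree. -/
lemma weight_step [Fintype V] (G : SimpleGraph V) (hT : G.IsTree) {a b d : V}
    (hab : G.Adj a b) (hbd : G.Adj b d) (had : a ≠ d) :
    (weightFrom G b : ℤ) - weightFrom G a + 2 ≤ (weightFrom G d : ℤ) - weightFrom G b := by
  classical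
  have key : ∀ y : V, ((G.dist y b : ℤ) - G.dist y a) + (if y = b then 2 else 0)
      ≤ (G.dist y d : ℤ) - G.dist y b := by
    intro y
    by_cases hy : y = b
    · subst hy
      have h1 : G.dist y a = 1 := SimpleGraph.dist_eq_one_iff_adj.mpr hab.symm
      have h2 : G.dist y d = 1 := SimpleGraph.dist_eq_one_iff_adj.mpr hbd
      have h3 : G.dist y y = 0 := (SimpleGraph.dist_self : G.dist y y = 0)
      simp [h1, h2, h3]
    · simp only [hy, if_false, add_zero]
      have e1 := dist_adj_diff G hT hab y
      have e2 := dist_adj_diff G hT hbd y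
      rcases e2 with h | h
      · -- dist y d = dist y b + 1
        rcases e1 with h' | h' <;> omega
      · -- d is a descending neighbor; then a is not
        have hnot : ¬ G.dist y a < G.dist y b := fun hlt =>
          unique_descent G hT hab.symm hbd had y hlt (by omega)
        rcases e1 with h' | h' <;> omega
  have hsum := Finset.sum_le_sum (fun y (_ : y ∈ Finset.univ) => key y)
  rw [Finset.sum_add_distrib, Finset.sum_ite_eq' Finset.univ b (fun _ => (2:ℤ))] at hsum
  simp only [Finset.mem_univ, if_true, Finset.sum_sub_distrib] at hsum
  unfold weightFrom
  push_cast
  exact hsum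

/-- Convexity of weights along a path. -/
lemma weight_convex [Fintype V] (G : SimpleGraph V) (hT : G.IsTree) :
    ∀ {b c : V} (P : G.Walk b c), P.IsPath → ∀ a, G.Adj a b → a ∉ P.support →
    ∀ m : ℤ, m ≤ (weightFrom G b : ℤ) - weightFrom G a →
    (m + 2) * P.length ≤ (weightFrom G c : ℤ) - weightFrom G b := by
  intro b c P
  induction P with
  | nil => intro _ a _ _ m _; simp
  | @cons b x c h q ih =>
    intro hP a hab hasup m hm
    simp only [SimpleGraph.Walk.support_cons, List.mem_cons, not_or] at hasup
    have hax : a ≠ x := fun he => hasup.2 (he ▸ q.start_mem_support)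
    have hstep := weight_step G hT hab h hax
    have hq : q.IsPath := hP.of_cons
    have hbq : b ∉ q.support := ((SimpleGraph.Walk.cons_isPath_iff h q).mp hP).2
    have hih := ih hq b h hbq (m + 2) (by linarith)
    have hlen : (0:ℤ) ≤ q.length := Int.natCast_nonneg _
    have : ((SimpleGraph.Walk.cons h q).length : ℤ) = q.length + 1 := by
      rw [SimpleGraph.Walk.length_cons]; push_cast; ring
    rw [this]
    nlinarith

/-- Any two weight centers of a tree are at distance at most 1. -/
lemma centers_close [Fintype V] (G : SimpleGraph V) (hT : G.IsTree) {w w' : V}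
    (hw : w ∈ weightCenters G) (hw' : w' ∈ weightCenters G) : G.dist w w' ≤ 1 := by
  by_contra hlt
  push_neg at hlt
  obtain ⟨P, hP, hPl⟩ := hT.isConnected.exists_path_of_dist w w'
  cases P with
  | nil => simp at hlt
  | @cons _ x _ h q =>
    have hq : q.IsPath := hP.of_cons
    have hwq : w ∉ q.support := ((SimpleGraph.Walk.cons_isPath_iff h q).mp hP).2
    have hm : ((weightFrom G x : ℤ) - weightFrom G w) ≤ (weightFrom G x : ℤ) - weightFrom G w :=
      le_refl _
    have hconv := weight_convex G hT q hq w h hwq _ hm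
    have hm0 : (0:ℤ) ≤ (weightFrom G x : ℤ) - weightFrom G w := by
      have := hw x; push_cast; omega
    have hql : 1 ≤ q.length := by
      rw [SimpleGraph.Walk.length_cons] at hPl; omega
    have hw'x : (weightFrom G w' : ℤ) ≤ weightFrom G x := by
      have := hw' x; push_cast; omega
    have hql' : (1:ℤ) ≤ (q.length : ℤ) := by exact_mod_cast hql
    nlinarith

lemma centers_nonempty [Fintype V] [Nonempty V] (G : SimpleGraph V) :
    (weightCenters G).Nonempty := by
  obtain ⟨v, -, hv⟩ := Finset.exists_min_image Finset.univ (weightFrom G) Finset.univ_nonempty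
  exact ⟨v, fun x => hv x (Finset.mem_univ x)⟩

lemma level_le [Fintype V] (G : SimpleGraph V) (u w : V) (hw : w ∈ weightCenters G) :
    level G u ≤ G.dist u w :=
  Nat.sInf_le ⟨w, hw, rfl⟩

lemma exists_level [Fintype V] [Nonempty V] (G : SimpleGraph V) (u : V) :
    ∃ w ∈ weightCenters G, G.dist u w = level G u := by
  have hne : (G.dist u '' weightCenters G).Nonempty := (centers_nonempty G).image _
  have := Nat.sInf_mem hne
  obtain ⟨w, hw, hww⟩ := this
  exact ⟨w, hw, hww⟩

/-- Key distance bound: `d(u,v) ≤ L(u) + L(v) + 1 - ε`. -/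
lemma dist_le_level [Fintype V] [Nonempty V] (G : SimpleGraph V) (hT : G.IsTree) (u v : V) :
    (G.dist u v : ℤ) ≤ level G u + level G v + 1 - epsilon G := by
  have hc := hT.isConnected
  obtain ⟨wu, hwu, hwul⟩ := exists_level G u
  obtain ⟨wv, hwv, hwvl⟩ := exists_level G v
  have ht1 : G.dist u v ≤ G.dist u wu + G.dist wu v := hc.dist_triangle
  have ht2 : G.dist wu v ≤ G.dist wu wv + G.dist wv v := hc.dist_triangle
  have hclose : G.dist wu wv ≤ 1 := centers_close G hT hwu hwv
  have hd : G.dist wv v = G.dist v wv := SimpleGraph.dist_comm ..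
  by_cases h1 : (weightCenters G).ncard = 1
  · -- unique center: wu = wv
    obtain ⟨w, hw⟩ := Set.ncard_eq_one.mp h1
    have e1 : wu = w := by have := hwu; rw [hw] at this; exact this
    have e2 : wv = w := by have := hwv; rw [hw] at this; exact this
    have : G.dist wu wv = 0 := by
      rw [e1, e2]; exact hc.dist_eq_zero_iff.mpr rfl
    simp only [epsilon, h1, if_true]
    push_cast
    omega
  · simp only [epsilon, h1, if_false]
    push_cast
    omega

/-- When there is a unique weight center, two distinct vertices can't both have level 0. -/
lemma level_pos_of_ne [Fintype V] (G : SimpleGraph V) (hT : G.IsTree)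
    (h1 : (weightCenters G).ncard = 1) {u v : V} (huv : u ≠ v) :
    1 ≤ level G u + level G v := by
  by_contra h
  push_neg at h
  obtain ⟨w, hw⟩ := Set.ncard_eq_one.mp h1
  have hwc : w ∈ weightCenters G := by rw [hw]; rfl
  have hlu : level G u = 0 := by omega
  have hlv : level G v = 0 := by omega
  have hu : G.dist u w = 0 := by
    have h' : level G u = G.dist u w := by
      unfold level; rw [hw, Set.image_singleton, csInf_singleton _]
    omega
  have hv : G.dist v w = 0 := by
    have h' : level G v = G.dist v w := by
      unfold level; rw [hw, Set.image_singleton, csInf_singleton _]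
    omega
  have e1 := hT.isConnected.dist_eq_zero_iff.mp hu
  have e2 := hT.isConnected.dist_eq_zero_iff.mp hv
  exact huv (e1.trans e2.symm)

/-- There exists a radio labeling. -/
lemma exists_radio [Fintype V] (G : SimpleGraph V) :
    { n | ∃ f : V → ℕ, IsRadioLabeling G f ∧ span f = n }.Nonempty := by
  classical
  set f : V → ℕ := fun v => (G.diam + 1) * (Fintype.equivFin V v) with hf
  refine ⟨span f, f, ?_, rfl⟩
  intro u v huv
  have hne : (Fintype.equivFin V u : ℕ) ≠ (Fintype.equivFin V v : ℕ) := by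
    simp only [ne_eq, Fin.val_eq_val, EmbeddingLike.apply_eq_iff_eq]
    exact huv
  have : (G.diam + 1 : ℤ) ≤ ((f u : ℤ) - (f v : ℤ)).natAbs := by
    have : ((f u : ℤ) - (f v : ℤ)) = (G.diam + 1 : ℤ) *
        ((Fintype.equivFin V u : ℤ) - (Fintype.equivFin V v : ℤ)) := by
      simp [hf]; push_cast; ring
    rw [this]
    have h1 : (1:ℤ) ≤ |((Fintype.equivFin V u : ℤ) - (Fintype.equivFin V v : ℤ))| :=
      Int.one_le_abs (by intro h; exact hne (by omega))
    have h2 : (0:ℤ) ≤ (G.diam + 1 : ℤ) := by positivity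
    rw [Int.natCast_natAbs, abs_mul, abs_of_nonneg h2]
    nlinarith
  omega

lemma radio_injective [Fintype V] (G : SimpleGraph V) (hd : 2 ≤ G.diam) {f : V → ℕ}
    (hf : IsRadioLabeling G f) : Function.Injective f := by
  intro u v h
  by_contra huv
  have := hf u v huv
  have hle : G.dist u v ≤ G.diam :=
    SimpleGraph.dist_le_diam (SimpleGraph.ediam_ne_top_of_diam_ne_zero (by omega))
  rw [h] at this
  simp at this
  omega

/-- Bantva–Vaidya–Zhou lower bound.
Let `T` be a tree with order `p` and diameter `d ≥ 2`, and `ε = ε(T)`.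
Then `rn(T) ≥ (p-1)(d+ε) - 2 L(T) + ε`. -/
theorem radioNumber_tree_lower_bound {V : Type*} [Fintype V]
    (G : SimpleGraph V) (hT : G.IsTree) (hd : 2 ≤ G.diam) :
    ((Fintype.card V : ℤ) - 1) * ((G.diam : ℤ) + (epsilon G : ℤ))
        - 2 * (totalLevel G : ℤ) + (epsilon G : ℤ)
      ≤ (radioNumber G : ℤ) := by
  classical
  have hc := hT.isConnected
  haveI : Nonempty V := hc.nonempty
  haveI : Nontrivial V := SimpleGraph.nontrivial_of_diam_ne_zero (G := G) (by omega)
  obtain ⟨f, hrl, hspan⟩ := Nat.sInf_mem (exists_radio G)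
  rw [show radioNumber G = sInf {n | ∃ f, IsRadioLabeling G f ∧ span f = n} from rfl] at *
  set p := Fintype.card V with hp
  have hp2 : 2 ≤ p := Fintype.one_lt_card
  have hfi : Function.Injective f := radio_injective G hd hrl
  -- order the vertices by label
  set s : Finset ℕ := Finset.univ.image f with hsdef
  have hs : s.card = p := by
    rw [hsdef, Finset.card_image_of_injective _ hfi, Finset.card_univ]
  set e' : Fin p ≃o {x // x ∈ s} := s.orderIsoOfFin hs with he'
  have hF : Function.Bijective (fun v : V => (⟨f v, by
      simp [hsdef]⟩ : {x // x ∈ s})) := by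
    constructor
    · intro u v huv
      exact hfi (congrArg Subtype.val huv)
    · rintro ⟨n, hn⟩
      simp only [hsdef, Finset.mem_image, Finset.mem_univ, true_and] at hn
      obtain ⟨v, hv⟩ := hn
      exact ⟨v, Subtype.ext hv⟩
  set F : V ≃ {x // x ∈ s} := Equiv.ofBijective _ hF with hFdef
  set e : Fin p ≃ V := e'.toEquiv.trans F.symm with hedef
  have hfe : ∀ i : Fin p, f (e i) = (e' i : ℕ) := by
    intro i
    have h1 : F (F.symm (e' i)) = e' i := F.apply_symm_apply _
    have := congrArg Subtype.val h1
    exact this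
  have hmono : ∀ i j : Fin p, i < j → f (e i) < f (e j) := by
    intro i j hij
    rw [hfe, hfe]
    exact Subtype.coe_lt_coe.mpr (e'.strictMono hij)
  -- sequences
  set g : ℕ → ℤ := fun i => if h : i < p then (f (e ⟨i, h⟩) : ℤ) else 0 with hgdef
  set lv : ℕ → ℤ := fun i => if h : i < p then (level G (e ⟨i, h⟩) : ℤ) else 0 with hlvdef
  have key : ∀ i ∈ Finset.range (p - 1),
      (G.diam : ℤ) + epsilon G - lv i - lv (i + 1) ≤ g (i + 1) - g i := by
    intro i hi
    rw [Finset.mem_range] at hi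
    have h1 : i < p := by omega
    have h2 : i + 1 < p := by omega
    set u := e ⟨i + 1, h2⟩ with hu
    set v := e ⟨i, h1⟩ with hv
    have hne : u ≠ v := by
      intro h
      have := e.injective h
      simp only [Fin.mk.injEq] at this
      omega
    have hlt : f v < f u := hmono ⟨i, h1⟩ ⟨i + 1, h2⟩ (by simp [Fin.lt_def])
    have hrad := hrl u v hne
    have hdist := dist_le_level G hT u v
    have habs : (((f u : ℤ) - f v).natAbs : ℤ) = (f u : ℤ) - f v := by
      rw [Int.natCast_natAbs, abs_of_nonneg (by push_cast; omega)]
    have hrad' : (G.diam : ℤ) + 1 ≤ (G.dist u v : ℤ) + (((f u : ℤ) - f v).natAbs : ℤ) := by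
      exact_mod_cast hrad
    rw [habs] at hrad'
    have hgv : g i = (f v : ℤ) := by simp [hgdef, h1, hv]
    have hgu : g (i + 1) = (f u : ℤ) := by simp [hgdef, h2, hu]
    have hlvi : lv i = (level G v : ℤ) := by simp [hlvdef, h1, hv]
    have hlvi' : lv (i + 1) = (level G u : ℤ) := by simp [hlvdef, h2, hu]
    rw [hgv, hgu, hlvi, hlvi']
    linarith
  have hsum := Finset.sum_le_sum key
  rw [Finset.sum_range_sub g (p - 1)] at hsum
  -- rewrite the LHS sum
  have hsplit : ∑ i ∈ Finset.range (p - 1),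
      ((G.diam : ℤ) + epsilon G - lv i - lv (i + 1))
      = (p - 1 : ℤ) * ((G.diam : ℤ) + epsilon G)
        - ∑ i ∈ Finset.range (p - 1), lv i
        - ∑ i ∈ Finset.range (p - 1), lv (i + 1) := by
    rw [Finset.sum_sub_distrib, Finset.sum_sub_distrib, Finset.sum_const,
      Finset.card_range, nsmul_eq_mul]
    have : ((p - 1 : ℕ) : ℤ) = (p : ℤ) - 1 := by omega
    rw [this]
  have hs1 : ∑ i ∈ Finset.range p, lv i
      = ∑ i ∈ Finset.range (p - 1), lv i + lv (p - 1) := by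
    have := Finset.sum_range_succ lv (p - 1)
    rwa [show p - 1 + 1 = p by omega] at this
  have hs2 : ∑ i ∈ Finset.range p, lv i
      = ∑ i ∈ Finset.range (p - 1), lv (i + 1) + lv 0 := by
    have := Finset.sum_range_succ' lv (p - 1)
    rwa [show p - 1 + 1 = p by omega] at this
  have htot : ∑ i ∈ Finset.range p, lv i = (totalLevel G : ℤ) := by
    rw [← Fin.sum_univ_eq_sum_range]
    have h1 : ∀ i : Fin p, lv i = (level G (e i) : ℤ) := by
      intro i; simp [hlvdef, i.isLt]
    rw [Finset.sum_congr rfl fun i _ => h1 i]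
    rw [Equiv.sum_comp e (fun v => (level G v : ℤ))]
    simp [totalLevel]
  have heps : (epsilon G : ℤ) ≤ lv 0 + lv (p - 1) := by
    have h0 : 0 < p := by omega
    have h1 : p - 1 < p := by omega
    have hl0 : lv 0 = (level G (e ⟨0, h0⟩) : ℤ) := by simp [hlvdef, h0]
    have hl1 : lv (p - 1) = (level G (e ⟨p - 1, h1⟩) : ℤ) := by simp [hlvdef, h1]
    by_cases hn : (weightCenters G).ncard = 1
    · have hne : e ⟨0, h0⟩ ≠ e ⟨p - 1, h1⟩ := by
        intro h
        have := e.injective h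
        simp only [Fin.mk.injEq] at this
        omega
      have := level_pos_of_ne G hT hn hne
      rw [hl0, hl1]
      simp only [epsilon, hn, if_true]
      push_cast
      omega
    · simp only [epsilon, hn, if_false]
      rw [hl0, hl1]
      push_cast
      omega
  -- span bound
  have hspanb : g (p - 1) - g 0 ≤ (span f : ℤ) := by
    have h0 : 0 < p := by omega
    have h1 : p - 1 < p := by omega
    have hle : (((f (e ⟨p - 1, h1⟩) : ℤ) - f (e ⟨0, h0⟩)).natAbs : ℕ) ≤ span f := by
      exact Finset.le_sup (f := fun q : V × V => ((f q.1 : ℤ) - (f q.2 : ℤ)).natAbs)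
        (Finset.mem_univ (e ⟨p - 1, h1⟩, e ⟨0, h0⟩))
    have hg1 : g (p - 1) = (f (e ⟨p - 1, h1⟩) : ℤ) := by simp [hgdef, h1]
    have hg0 : g 0 = (f (e ⟨0, h0⟩) : ℤ) := by simp [hgdef, h0]
    rw [hg1, hg0]
    have : ((f (e ⟨p - 1, h1⟩) : ℤ) - f (e ⟨0, h0⟩))
        ≤ (((f (e ⟨p - 1, h1⟩) : ℤ) - f (e ⟨0, h0⟩)).natAbs : ℤ) := Int.le_natAbs
    calc ((f (e ⟨p - 1, h1⟩) : ℤ) - f (e ⟨0, h0⟩)) ≤ _ := this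
      _ ≤ (span f : ℤ) := by exact_mod_cast hle
  rw [hsplit] at hsum
  rw [← hspan]
  push_cast
  linarith [hsum, hspanb, heps, hs1, hs2, htot]

end Radio
end

section
/- Let T be a tree with order p and diameter d ≥ 2, and let ε = ε(T). Suppose there exists a linear order u_0, u_1, ..., u_{p-1} of the vertices of T such that (a) u_0 = w and u_{p-1} ∈ N(w) when W(T) = {w}, and {u_0, u_{p-1}} = {w, w'} when W(T) = {w, w'}; and (b) for all 0 ≤ i < j ≤ p-1, d(u_i, u_j) ≥ Σ_{t=i}^{j-1}(L(u_t) + L(u_{t+1})) - (j-i)(d+ε) + (d+1). Then rn(T) = (p-1)(d+ε) - 2L(T) + ε. -/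
namespace Radio

variable {V : Type*}

open SimpleGraph Walk

variable {G : SimpleGraph V}

/-! ### Tree preliminaries -/

lemma getVert_eq_support_getD {u v : V} (p : G.Walk u v) (n : ℕ) (hn : n ≤ p.length) :
    p.getVert n = p.support.getD n v := by
  induction p generalizing n with
  | nil =>
    simp only [Walk.length_nil, Nat.le_zero] at hn
    subst hn; simp
  | cons h q ih =>
    cases n with
    | zero => simp
    | succ m =>
      simp only [Walk.getVert_cons_succ, Walk.support_cons, List.getD_cons_succ]
      exact ih m (by simpa using hn)

lemma IsPath.getVert_inj {u v : V} {p : G.Walk u v} (hp : p.IsPath) {i j : ℕ}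
    (hi : i ≤ p.length) (hj : j ≤ p.length) (hij : i ≠ j) :
    p.getVert i ≠ p.getVert j := by
  rw [getVert_eq_support_getD p i hi, getVert_eq_support_getD p j hj]
  have hnd : p.support.Nodup := hp.support_nodup
  have hlen : p.support.length = p.length + 1 := p.length_support
  have hi' : i < p.support.length := by omega
  have hj' : j < p.support.length := by omega
  rw [List.getD_eq_getElem _ _ hi', List.getD_eq_getElem _ _ hj']
  intro h
  exact hij (List.Nodup.getElem_inj_iff hnd |>.mp h)

/-- In a tree, every path realizes the distance. -/
lemma tree_length_eq_dist (hT : G.IsTree) {a b : V} {p : G.Walk a b} (hp : p.IsPath) :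
    p.length = G.dist a b := by
  classical
  obtain ⟨q, hq, hql⟩ := hT.isConnected.exists_path_of_dist a b
  have := hT.IsAcyclic.path_unique ⟨p, hp⟩ ⟨q, hq⟩
  rw [← hql]
  exact congrArg Walk.length (congrArg Subtype.val this)

lemma concat_isPath {a b c : V} {p : G.Walk a b} (hp : p.IsPath) (h : G.Adj b c)
    (hc : c ∉ p.support) : (p.concat h).IsPath := by
  rw [Walk.isPath_def, Walk.support_concat]
  refine List.Nodup.append hp.support_nodup (by simp) ?_
  intro x hx hx'
  simp at hx'
  subst hx'
  exact hc hx

/-- In a tree, adjacent vertices have distances to any vertex differing by exactly one. -/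
lemma tree_dist_adj_step (hT : G.IsTree) {b c : V} (h : G.Adj b c) (u : V) :
    G.dist u c = G.dist u b + 1 ∨ G.dist u b = G.dist u c + 1 := by
  classical
  have hconn := hT.isConnected
  have hbc : G.dist b c = 1 := SimpleGraph.dist_eq_one_iff_adj.mpr h
  have h1 : G.dist u c ≤ G.dist u b + 1 := by
    calc G.dist u c ≤ G.dist u b + G.dist b c := hconn.dist_triangle
    _ = G.dist u b + 1 := by rw [hbc]
  have h2 : G.dist u b ≤ G.dist u c + 1 := by
    have : G.dist c b = 1 := SimpleGraph.dist_eq_one_iff_adj.mpr h.symm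
    calc G.dist u b ≤ G.dist u c + G.dist c b := hconn.dist_triangle
    _ = G.dist u c + 1 := by rw [this]
  have hne : G.dist u c ≠ G.dist u b := by
    intro heq
    obtain ⟨p, hp, hpl⟩ := hconn.exists_path_of_dist u b
    by_cases hcs : c ∈ p.support
    · have ht : (p.takeUntil c hcs).length = G.dist u c :=
        tree_length_eq_dist hT (hp.takeUntil hcs)
      have hsum := congrArg Walk.length (p.take_spec hcs)
      rw [Walk.length_append] at hsum
      have hd0 : (p.dropUntil c hcs).length = 0 := by omega
      exact h.ne' (Walk.eq_of_length_eq_zero hd0)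
    · have hcp : (p.concat h).IsPath := concat_isPath hp h hcs
      have := tree_length_eq_dist hT hcp
      rw [Walk.length_concat, hpl] at this
      omega
  omega

/-- In a tree, the neighbour of `b` which is closer to `u` is unique. -/
lemma tree_unique_closer (hT : G.IsTree) {b x y u : V} (hx : G.Adj x b) (hy : G.Adj y b)
    (hdx : G.dist u x + 1 = G.dist u b) (hdy : G.dist u y + 1 = G.dist u b) : x = y := by
  classical
  have hconn := hT.isConnected
  obtain ⟨p, hp, hpl⟩ := hconn.exists_path_of_dist u x
  obtain ⟨q, hq, hql⟩ := hconn.exists_path_of_dist u y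
  have hbp : b ∉ p.support := by
    intro hb
    have := SimpleGraph.dist_le (p.takeUntil b hb)
    have := p.length_takeUntil_le hb
    omega
  have hbq : b ∉ q.support := by
    intro hb
    have := SimpleGraph.dist_le (q.takeUntil b hb)
    have := q.length_takeUntil_le hb
    omega
  have hP : (p.concat hx).IsPath := concat_isPath hp hx hbp
  have hQ : (q.concat hy).IsPath := concat_isPath hq hy hbq
  have := hT.IsAcyclic.path_unique ⟨p.concat hx, hP⟩ ⟨q.concat hy, hQ⟩
  have heq : p.concat hx = q.concat hy := congrArg Subtype.val this
  obtain ⟨hv, -⟩ := Walk.concat_inj heq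
  exact hv

/-- Key monotonicity lemma along a path in a tree. -/
lemma tree_dist_lt_of_lt (hT : G.IsTree) {a b c u : V} (hab : G.Adj a b) (hbc : G.Adj b c)
    (hac : a ≠ c) (hlt : G.dist u a < G.dist u b) : G.dist u b < G.dist u c := by
  have h1 : G.dist u a + 1 = G.dist u b := by
    rcases tree_dist_adj_step hT hab u with h | h <;> omega
  by_contra hle
  have h2 : G.dist u c + 1 = G.dist u b := by
    rcases tree_dist_adj_step hT hbc u with h | h <;> omega
  exact hac (tree_unique_closer hT hab hbc.symm h1 h2)

/-! ### Weight centers of a tree -/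

lemma centers_dist_le_one [Fintype V] (hT : G.IsTree) {a b : V}
    (ha : a ∈ weightCenters G) (hb : b ∈ weightCenters G) : G.dist a b ≤ 1 := by
  classical
  by_contra hk
  push_neg at hk
  obtain ⟨P, hP, hPl⟩ := hT.isConnected.exists_path_of_dist a b
  set k := G.dist a b with hkdef
  have hk2 : 2 ≤ k := hk
  have hPlen : P.length = k := hPl
  set x : ℕ → V := fun i => P.getVert i with hx
  have hx0 : x 0 = a := P.getVert_zero
  have hxk : x k = b := by rw [hx]; simp only [← hPlen]; exact P.getVert_length
  have hadj : ∀ i, i < k → G.Adj (x i) (x (i+1)) := fun i hi =>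
    P.adj_getVert_succ (by omega)
  have hne : ∀ i j, i ≤ k → j ≤ k → i ≠ j → x i ≠ x j := fun i j hi hj hij =>
    IsPath.getVert_inj hP (by omega) (by omega) hij
  set S : ℕ → Finset V := fun i =>
    Finset.univ.filter (fun z => G.dist z (x i) < G.dist z (x (i+1))) with hS
  have hstep : ∀ i, i < k →
      (weightFrom G (x i) : ℤ) - weightFrom G (x (i+1))
        = (Fintype.card V : ℤ) - 2 * (S i).card := by
    intro i hi
    have hdiff : (weightFrom G (x i) : ℤ) - weightFrom G (x (i+1))
        = ∑ z : V, ((G.dist z (x i) : ℤ) - G.dist z (x (i+1))) := by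
      unfold weightFrom
      push_cast
      rw [Finset.sum_sub_distrib]
    rw [hdiff]
    rw [← Finset.sum_filter_add_sum_filter_not Finset.univ
      (fun z => G.dist z (x i) < G.dist z (x (i+1)))]
    have h1 : ∀ z ∈ Finset.univ.filter (fun z => G.dist z (x i) < G.dist z (x (i+1))),
        (G.dist z (x i) : ℤ) - G.dist z (x (i+1)) = -1 := by
      intro z hz
      simp only [Finset.mem_filter] at hz
      rcases tree_dist_adj_step hT (hadj i hi) z with h | h <;> omega
    have h2 : ∀ z ∈ Finset.univ.filter (fun z => ¬ G.dist z (x i) < G.dist z (x (i+1))),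
        (G.dist z (x i) : ℤ) - G.dist z (x (i+1)) = 1 := by
      intro z hz
      simp only [Finset.mem_filter] at hz
      rcases tree_dist_adj_step hT (hadj i hi) z with h | h <;> omega
    rw [Finset.sum_congr rfl h1, Finset.sum_congr rfl h2]
    rw [Finset.sum_const, Finset.sum_const]
    have hcards := Finset.card_filter_add_card_filter_not
      (s := (Finset.univ : Finset V))
      (p := fun z => G.dist z (x i) < G.dist z (x (i+1)))
    rw [Finset.card_univ] at hcards
    simp only [hS, nsmul_eq_mul, mul_neg_one, mul_one]
    push_cast [← hcards]
    ring
  have hmono : ∀ i, i + 2 ≤ k → (S i).card < (S (i+1)).card := by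
    intro i hi
    apply Finset.card_lt_card
    constructor
    · intro z hz
      simp only [hS, Finset.mem_filter, Finset.mem_univ, true_and] at hz ⊢
      exact tree_dist_lt_of_lt hT (hadj i (by omega)) (hadj (i+1) (by omega))
        (hne i (i+2) (by omega) (by omega) (by omega)) hz
    · intro hsub
      have hmem : x (i+1) ∈ S (i+1) := by
        simp only [hS, Finset.mem_filter, Finset.mem_univ, true_and]
        have h0 : G.dist (x (i+1)) (x (i+1)) = 0 := SimpleGraph.dist_self
        have hpos : 0 < G.dist (x (i+1)) (x (i+1+1)) :=
          hT.isConnected.pos_dist_of_ne (hne (i+1) (i+1+1) (by omega) (by omega) (by omega))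
        omega
      have hnmem : x (i+1) ∉ S i := by
        simp only [hS, Finset.mem_filter, Finset.mem_univ, true_and]
        have : G.dist (x (i+1)) (x (i+1)) = 0 := SimpleGraph.dist_self
        omega
      exact hnmem (hsub hmem)
  have hchain : ∀ j, j ≤ k - 1 → (S 0).card + j ≤ (S j).card := by
    intro j
    induction j with
    | zero => simp
    | succ m ih =>
      intro hm
      have h1 := ih (by omega)
      have h2 := hmono m (by omega)
      omega
  have hlast := hchain (k-1) (le_refl _)
  have hw1 : (weightFrom G (x 0) : ℤ) - weightFrom G (x 1) ≤ 0 := by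
    have h := ha (x 1)
    rw [← hx0] at h
    omega
  have hw2 : 0 ≤ (weightFrom G (x (k-1)) : ℤ) - weightFrom G (x k) := by
    have h := hb (x (k-1))
    rw [← hxk] at h
    omega
  have e1 := hstep 0 (by omega)
  have e2 := hstep (k-1) (by omega)
  have hk1 : k - 1 + 1 = k := by omega
  rw [hk1] at e2
  rw [e1] at hw1
  rw [e2] at hw2
  have : (S 0).card + (k - 1) ≤ (S (k-1)).card := hlast
  have hk3 : 1 ≤ k - 1 := by omega
  omega

lemma centers_adj [Fintype V] (hT : G.IsTree) {a b : V}
    (ha : a ∈ weightCenters G) (hb : b ∈ weightCenters G) (hab : a ≠ b) : G.Adj a b := by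
  have h1 := centers_dist_le_one hT ha hb
  have h2 : 0 < G.dist a b := hT.isConnected.pos_dist_of_ne hab
  exact SimpleGraph.dist_eq_one_iff_adj.mp (by omega)

lemma centers_not_three (hT : G.IsTree) {a b c : V}
    (hab : G.Adj a b) (hbc : G.Adj b c) (hac : G.Adj a c) : False := by
  have hp1 : (Walk.cons hac Walk.nil : G.Walk a c).IsPath := by
    simp [Walk.isPath_def, hac.ne]
  have hp2 : (Walk.cons hab (Walk.cons hbc Walk.nil) : G.Walk a c).IsPath := by
    simp [Walk.isPath_def, hab.ne, hbc.ne, hac.ne]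
  have := hT.IsAcyclic.path_unique ⟨_, hp1⟩ ⟨_, hp2⟩
  have hl := congrArg Walk.length (congrArg Subtype.val this)
  simp at hl

lemma centers_structure [Fintype V] [Nonempty V] (hT : G.IsTree) :
    (∃ w : V, weightCenters G = {w}) ∨
    (∃ w w' : V, w ≠ w' ∧ G.Adj w w' ∧ weightCenters G = {w, w'}) := by
  classical
  obtain ⟨w, -, hw⟩ := Finset.exists_min_image Finset.univ (weightFrom G)
    Finset.univ_nonempty
  have hwc : w ∈ weightCenters G := fun x => hw x (Finset.mem_univ x)
  by_cases hall : ∀ z ∈ weightCenters G, z = w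
  · left
    exact ⟨w, Set.eq_singleton_iff_unique_mem.mpr ⟨hwc, hall⟩⟩
  · right
    push_neg at hall
    obtain ⟨w', hw'c, hw'ne⟩ := hall
    refine ⟨w, w', hw'ne.symm, centers_adj hT hwc hw'c hw'ne.symm, ?_⟩
    ext z
    constructor
    · intro hz
      by_contra hzne
      simp only [Set.mem_insert_iff, Set.mem_singleton_iff] at hzne
      push_neg at hzne
      exact centers_not_three hT (centers_adj hT hwc hw'c hw'ne.symm)
        (centers_adj hT hw'c hz (Ne.symm hzne.2)) (centers_adj hT hwc hz (Ne.symm hzne.1))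
    · intro hz
      rcases hz with hz | hz
      · subst hz; exact hwc
      · simp only [Set.mem_singleton_iff] at hz; subst hz; exact hw'c

lemma level_eq_single [Fintype V] {w : V} (hW : weightCenters G = {w}) (x : V) :
    level G x = G.dist x w := by
  unfold level
  rw [hW, Set.image_singleton, csInf_singleton]

lemma level_eq_pair [Fintype V] {w w' : V} (hW : weightCenters G = {w, w'}) (x : V) :
    level G x = min (G.dist x w) (G.dist x w') := by
  unfold level
  rw [hW, Set.image_pair, csInf_pair]


lemma dist_le_levels [Fintype V] [Nonempty V] (hT : G.IsTree) (x y : V) :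
    (G.dist x y : ℤ) ≤ level G x + level G y + 1 - epsilon G := by
  classical
  rcases centers_structure hT with ⟨w, hW⟩ | ⟨w, w', hwne, hadj, hW⟩
  · have he : epsilon G = 1 := by unfold epsilon; rw [hW]; simp
    rw [level_eq_single hW x, level_eq_single hW y, he]
    have t1 : G.dist x y ≤ G.dist x w + G.dist w y := hT.isConnected.dist_triangle
    have t2 : G.dist w y = G.dist y w := SimpleGraph.dist_comm
    push_cast
    omega
  · have he : epsilon G = 0 := by
      unfold epsilon; rw [hW]; simp [Set.ncard_pair hwne]
    rw [level_eq_pair hW x, level_eq_pair hW y, he]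
    have h1 : G.dist w w' = 1 := SimpleGraph.dist_eq_one_iff_adj.mpr hadj
    have h1' : G.dist w' w = 1 := SimpleGraph.dist_eq_one_iff_adj.mpr hadj.symm
    have a1 : G.dist x y ≤ G.dist x w + G.dist y w := by
      calc G.dist x y ≤ G.dist x w + G.dist w y := hT.isConnected.dist_triangle
      _ = G.dist x w + G.dist y w := by rw [SimpleGraph.dist_comm (u := w)]
    have a2 : G.dist x y ≤ G.dist x w' + G.dist y w' := by
      calc G.dist x y ≤ G.dist x w' + G.dist w' y := hT.isConnected.dist_triangle
      _ = G.dist x w' + G.dist y w' := by rw [SimpleGraph.dist_comm (u := w')]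
    have a3 : G.dist x y ≤ G.dist x w + 1 + G.dist y w' := by
      calc G.dist x y ≤ G.dist x w + G.dist w y := hT.isConnected.dist_triangle
      _ ≤ G.dist x w + (G.dist w w' + G.dist w' y) :=
        Nat.add_le_add_left hT.isConnected.dist_triangle _
      _ = G.dist x w + 1 + G.dist y w' := by
        rw [h1, SimpleGraph.dist_comm (u := w')]; omega
    have a4 : G.dist x y ≤ G.dist x w' + 1 + G.dist y w := by
      calc G.dist x y ≤ G.dist x w' + G.dist w' y := hT.isConnected.dist_triangle
      _ ≤ G.dist x w' + (G.dist w' w + G.dist w y) :=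
        Nat.add_le_add_left hT.isConnected.dist_triangle _
      _ = G.dist x w' + 1 + G.dist y w := by
        rw [h1', SimpleGraph.dist_comm (u := w)]; omega
    rcases min_cases (G.dist x w) (G.dist x w') with ⟨hmx, -⟩ | ⟨hmx, -⟩ <;>
      rcases min_cases (G.dist y w) (G.dist y w') with ⟨hmy, -⟩ | ⟨hmy, -⟩ <;>
      rw [hmx, hmy] <;> push_cast <;> omega

lemma sum_range_comp_eq [Fintype V] {p : ℕ} (hp : p = Fintype.card V) (z : ℕ → V)
    (hinj : ∀ i j : ℕ, i < p → j < p → z i = z j → i = j) (F : V → ℤ) :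
    ∑ t ∈ Finset.range p, F (z t) = ∑ v : V, F v := by
  rw [← Fin.sum_univ_eq_sum_range (fun t => F (z t)) p]
  have hbij : Function.Bijective (fun i : Fin p => z i) := by
    rw [Fintype.bijective_iff_injective_and_card]
    constructor
    · intro a b hab
      exact Fin.ext (hinj a b a.2 b.2 hab)
    · simp [hp]
  exact hbij.sum_comp F


/-- sufficiency part of the Bantva–Vaidya–Zhou characterization.
If there is a linear order `u 0, u 1, …, u (p-1)` of the vertices of the tree `T`
satisfying conditions (a) and (b), then `rn(T) = (p-1)(d+ε) - 2 L(T) + ε`. -/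
theorem radioNumber_tree_eq_of_order {V : Type*} [Fintype V]
    (G : SimpleGraph V) (hT : G.IsTree) (hd : 2 ≤ G.diam)
    (u : ℕ → V)
    (horder : ∀ v : V, ∃! i : ℕ, i < Fintype.card V ∧ u i = v)
    -- (a), one weight center case
    (ha1 : ∀ w : V, weightCenters G = {w} →
      u 0 = w ∧ G.Adj w (u (Fintype.card V - 1)))
    -- (a), two weight centers case
    (ha2 : ∀ w w' : V, w ≠ w' → weightCenters G = {w, w'} →
      ({u 0, u (Fintype.card V - 1)} : Set V) = {w, w'})
    -- (b)
    (hb : ∀ i j : ℕ, i < j → j ≤ Fintype.card V - 1 →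
      (∑ t ∈ Finset.Ico i j, ((level G (u t) : ℤ) + (level G (u (t + 1)) : ℤ)))
          - ((j : ℤ) - (i : ℤ)) * ((G.diam : ℤ) + (epsilon G : ℤ)) + ((G.diam : ℤ) + 1)
        ≤ (G.dist (u i) (u j) : ℤ)) :
    (radioNumber G : ℤ) =
      ((Fintype.card V : ℤ) - 1) * ((G.diam : ℤ) + (epsilon G : ℤ))
        - 2 * (totalLevel G : ℤ) + (epsilon G : ℤ) := by
  classical
  have hd0 : G.diam ≠ 0 := by omega
  haveI hnt : Nontrivial V := G.nontrivial_of_diam_ne_zero hd0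
  have hconn := hT.isConnected
  set p := Fintype.card V with hpdef
  have hp2 : 2 ≤ p := Fintype.one_lt_card
  have hetop : G.ediam ≠ ⊤ := SimpleGraph.ediam_ne_top_of_diam_ne_zero hd0
  have hdle : ∀ a b : V, G.dist a b ≤ G.diam := fun a b => SimpleGraph.dist_le_diam hetop
  have heps01 : epsilon G = 0 ∨ epsilon G = 1 := by
    unfold epsilon; split <;> simp
  have hkey : ∀ x y : V, (G.dist x y : ℤ) ≤ level G x + level G y + 1 - epsilon G :=
    fun x y => dist_le_levels hT x y
  -- endpoint levels
  have hend : (level G (u 0) : ℤ) + level G (u (p - 1)) = epsilon G := by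
    rcases centers_structure hT with ⟨w, hW⟩ | ⟨w, w', hwne, hadj, hW⟩
    · obtain ⟨h0, hadj'⟩ := ha1 w hW
      have l0 : level G (u 0) = 0 := by
        rw [level_eq_single hW, h0, SimpleGraph.dist_self]
      have l1 : level G (u (p - 1)) = 1 := by
        rw [level_eq_single hW, SimpleGraph.dist_comm]
        exact SimpleGraph.dist_eq_one_iff_adj.mpr hadj'
      have he : epsilon G = 1 := by unfold epsilon; rw [hW]; simp
      rw [l0, l1, he]; norm_num
    · have hset := ha2 w w' hwne hW
      have hlev : ∀ z : V, z ∈ ({w, w'} : Set V) → level G z = 0 := by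
        intro z hz
        rw [level_eq_pair hW]
        rcases hz with hz | hz
        · subst hz; simp [SimpleGraph.dist_self]
        · simp only [Set.mem_singleton_iff] at hz
          subst hz; simp [SimpleGraph.dist_self]
      have h0mem : u 0 ∈ ({w, w'} : Set V) := hset ▸ Set.mem_insert _ _
      have h1mem : u (p - 1) ∈ ({w, w'} : Set V) :=
        hset ▸ Set.mem_insert_iff.mpr (Or.inr rfl)
      have he : epsilon G = 0 := by
        unfold epsilon; rw [hW]; simp [Set.ncard_pair hwne]
      rw [hlev _ h0mem, hlev _ h1mem, he]; norm_num
  have hlev1 : epsilon G = 1 → ∀ x y : V, x ≠ y → (1 : ℤ) ≤ level G x + level G y := by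
    intro he x y hxy
    rcases centers_structure hT with ⟨w, hW⟩ | ⟨w, w', hwne, hadj, hW⟩
    · by_contra hlt
      push_neg at hlt
      have hx0 : level G x = 0 := by omega
      have hy0 : level G y = 0 := by omega
      rw [level_eq_single hW] at hx0 hy0
      have hx' : x = w := hconn.dist_eq_zero_iff.mp hx0
      have hy' : y = w := hconn.dist_eq_zero_iff.mp hy0
      exact hxy (hx'.trans hy'.symm)
    · exfalso
      have : epsilon G = 0 := by
        unfold epsilon; rw [hW]; simp [Set.ncard_pair hwne]
      omega
  -- the labeling increments
  set LL : ℕ → ℤ := fun t => (level G (u t) : ℤ) + (level G (u (t + 1)) : ℤ) with hLL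
  set inc : ℕ → ℤ := fun t => ((G.diam : ℤ) + epsilon G) - LL t with hinc
  set g : ℕ → ℤ := fun n => ∑ t ∈ Finset.range n, inc t with hg
  have hgsub : ∀ i j : ℕ, i ≤ j → g j - g i = ∑ t ∈ Finset.Ico i j, inc t := by
    intro i j hij
    rw [Finset.sum_Ico_eq_sub _ hij]
  have hIco_val : ∀ i j : ℕ, i ≤ j → ∑ t ∈ Finset.Ico i j, inc t
      = ((j : ℤ) - i) * ((G.diam : ℤ) + epsilon G) - ∑ t ∈ Finset.Ico i j, LL t := by
    intro i j hij
    rw [hinc]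
    rw [Finset.sum_sub_distrib, Finset.sum_const, Nat.card_Ico, nsmul_eq_mul]
    rw [Nat.cast_sub hij]
  have hinc1 : ∀ t : ℕ, t + 1 ≤ p - 1 → 1 ≤ inc t := by
    intro t ht
    have h := hb t (t + 1) (by omega) ht
    rw [show Finset.Ico t (t + 1) = {t} from Nat.Ico_succ_singleton t,
      Finset.sum_singleton] at h
    have hdl := hdle (u t) (u (t + 1))
    have : (G.dist (u t) (u (t + 1)) : ℤ) ≤ (G.diam : ℤ) := by exact_mod_cast hdl
    simp only [hinc, hLL]
    push_cast at h ⊢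
    linarith
  have hgap : ∀ i j : ℕ, i ≤ j → j ≤ p - 1 → (j : ℤ) - i ≤ g j - g i := by
    intro i j hij hj
    rw [hgsub i j hij]
    calc ((j : ℤ) - i) = (Finset.Ico i j).card • (1 : ℤ) := by
          rw [Nat.card_Ico, nsmul_eq_mul, mul_one, Nat.cast_sub hij]
    _ ≤ ∑ t ∈ Finset.Ico i j, inc t := by
          apply Finset.card_nsmul_le_sum
          intro t hts
          rw [Finset.mem_Ico] at hts
          exact hinc1 t (by omega)
  have hg0 : g 0 = 0 := by simp [hg]
  have hgnonneg : ∀ i : ℕ, i ≤ p - 1 → 0 ≤ g i := by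
    intro i hi
    have := hgap 0 i (by omega) hi
    rw [hg0] at this
    push_cast at this
    omega
  have hgmono : ∀ i j : ℕ, i ≤ j → j ≤ p - 1 → g i ≤ g j := by
    intro i j hij hj
    have := hgap i j hij hj
    have : (0 : ℤ) ≤ (j : ℤ) - i := by omega
    omega
  have hb' : ∀ i j : ℕ, i < j → j ≤ p - 1 →
      (G.diam : ℤ) + 1 - G.dist (u i) (u j) ≤ g j - g i := by
    intro i j hij hj
    have h := hb i j hij hj
    rw [hgsub i j (le_of_lt hij), hIco_val i j (le_of_lt hij)]
    linarith
  -- index function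
  have hidx0 : ∀ v : V, ∃ i : ℕ, (i < p ∧ u i = v) := fun v => (horder v).exists
  choose idx hidxlt hidxu using fun v => (horder v).exists
  have hidx_unique : ∀ i : ℕ, i < p → idx (u i) = i := by
    intro i hi
    exact (horder (u i)).unique ⟨hidxlt _, hidxu _⟩ ⟨hi, rfl⟩
  set f0 : V → ℕ := fun v => (g (idx v)).toNat with hf0def
  have hf0 : ∀ v : V, (f0 v : ℤ) = g (idx v) := by
    intro v
    exact Int.toNat_of_nonneg (hgnonneg (idx v) (by have := hidxlt v; omega))
  -- f0 is a radio labeling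
  have hkey0 : ∀ a b : V, idx a < idx b →
      G.diam + 1 ≤ G.dist a b + ((f0 a : ℤ) - (f0 b : ℤ)).natAbs := by
    intro a b hab
    have h1 := hb' (idx a) (idx b) hab (by have := hidxlt b; omega)
    rw [hidxu a, hidxu b] at h1
    have h2 := hf0 a
    have h3 := hf0 b
    omega
  have hrad : IsRadioLabeling G f0 := by
    intro a b hab
    have hne : idx a ≠ idx b := by
      intro h
      exact hab (by rw [← hidxu a, h, hidxu b])
    rcases lt_or_gt_of_ne hne with h | h
    · exact hkey0 a b h
    · have h' := hkey0 b a h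
      have hdc : G.dist a b = G.dist b a := SimpleGraph.dist_comm
      omega
  -- span of f0
  have hspan : (span f0 : ℤ) = g (p - 1) := by
    have hle : span f0 ≤ (g (p - 1)).toNat := by
      apply Finset.sup_le
      intro q _
      have h1 := hf0 q.1
      have h2 := hf0 q.2
      have h3 := hgmono (idx q.1) (p - 1) (by have := hidxlt q.1; omega) le_rfl
      have h4 := hgmono (idx q.2) (p - 1) (by have := hidxlt q.2; omega) le_rfl
      have h5 := hgnonneg (idx q.1) (by have := hidxlt q.1; omega)
      have h6 := hgnonneg (idx q.2) (by have := hidxlt q.2; omega)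
      omega
    have hge : (g (p - 1)).toNat ≤ span f0 := by
      have hpair := Finset.le_sup (f := fun q : V × V => ((f0 q.1 : ℤ) - (f0 q.2 : ℤ)).natAbs)
        (Finset.mem_univ ((u (p - 1), u 0) : V × V))
      have e1 : (f0 (u (p - 1)) : ℤ) = g (p - 1) := by
        rw [hf0, hidx_unique (p - 1) (by omega)]
      have e0 : (f0 (u 0) : ℤ) = g 0 := by
        rw [hf0, hidx_unique 0 (by omega)]
      have hnn := hgnonneg (p - 1) le_rfl
      simp only [span] at hpair ⊢
      omega
    have := le_antisymm hle hge
    rw [this]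
    exact Int.toNat_of_nonneg (hgnonneg (p - 1) le_rfl)
  -- the value of g (p-1)
  have hsumA : ∑ t ∈ Finset.range p, (level G (u t) : ℤ) = (totalLevel G : ℤ) := by
    rw [sum_range_comp_eq (F := fun v => (level G v : ℤ)) hpdef u
      (fun i j hi hj hij => by
        have h1 := hidx_unique i hi
        have h2 := hidx_unique j hj
        rw [hij] at h1
        omega)]
    unfold totalLevel
    push_cast
    rfl
  have hp1 : p - 1 + 1 = p := by omega
  have hB1 : ∑ t ∈ Finset.range (p - 1), (level G (u t) : ℤ)
      = (totalLevel G : ℤ) - level G (u (p - 1)) := by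
    have := Finset.sum_range_succ (fun t => (level G (u t) : ℤ)) (p - 1)
    rw [hp1] at this
    rw [hsumA] at this
    omega
  have hB2 : ∑ t ∈ Finset.range (p - 1), (level G (u (t + 1)) : ℤ)
      = (totalLevel G : ℤ) - level G (u 0) := by
    have := Finset.sum_range_succ' (fun t => (level G (u t) : ℤ)) (p - 1)
    rw [hp1] at this
    rw [hsumA] at this
    omega
  have hval : g (p - 1) = ((p : ℤ) - 1) * ((G.diam : ℤ) + epsilon G)
      - 2 * totalLevel G + epsilon G := by
    have h1 : g (p - 1) = g (p - 1) - g 0 := by rw [hg0]; ring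
    rw [h1, hgsub 0 (p - 1) (by omega), hIco_val 0 (p - 1) (by omega)]
    have hIR : Finset.Ico 0 (p - 1) = Finset.range (p - 1) := by
      rw [Finset.range_eq_Ico]
    rw [hIR]
    have hLLsum : ∑ t ∈ Finset.range (p - 1), LL t
        = 2 * (totalLevel G : ℤ) - level G (u 0) - level G (u (p - 1)) := by
      simp only [hLL]
      rw [Finset.sum_add_distrib, hB1, hB2]
      ring
    rw [hLLsum]
    have hpc : ((p - 1 : ℕ) : ℤ) = (p : ℤ) - 1 := by push_cast [Nat.cast_sub (by omega : 1 ≤ p)]; ring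
    rw [hpc]
    simp only [Nat.cast_zero, sub_zero]
    linarith [hend]
  -- lower bound for all radio labelings
  have hlow : ∀ f : V → ℕ, IsRadioLabeling G f →
      ((p : ℤ) - 1) * ((G.diam : ℤ) + epsilon G) - 2 * totalLevel G + epsilon G
        ≤ (span f : ℤ) := by
    intro f hf
    have finj : Function.Injective f := by
      intro a b hab
      by_contra hne
      have h := hf a b hne
      have hdl := hdle a b
      rw [hab] at h
      simp at h
      omega
    set s : Finset ℕ := Finset.univ.image f with hs
    have hcard : s.card = p := by
      rw [hs, Finset.card_image_of_injective _ finj, Finset.card_univ]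
    set oi := s.orderIsoOfFin hcard with hoi
    have hchoice : ∀ i : Fin p, ∃ a : V, f a = (oi i : ℕ) := by
      intro i
      obtain ⟨a, -, ha⟩ := Finset.mem_image.mp (oi i).2
      exact ⟨a, ha⟩
    choose y' hy' using hchoice
    set y : ℕ → V := fun n => if h : n < p then y' ⟨n, h⟩ else y' ⟨0, by omega⟩ with hy
    have hyval : ∀ n (hn : n < p), f (y n) = (oi ⟨n, hn⟩ : ℕ) := by
      intro n hn
      simp only [hy, dif_pos hn]
      exact hy' _
    have hmono : ∀ i j : ℕ, i < j → j < p → f (y i) < f (y j) := by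
      intro i j hij hj
      rw [hyval i (by omega), hyval j hj]
      have hfin : (⟨i, by omega⟩ : Fin p) < ⟨j, hj⟩ := Fin.mk_lt_mk.mpr hij
      exact Subtype.coe_lt_coe.mpr (oi.lt_iff_lt.mpr hfin)
    have hyne : ∀ i j : ℕ, i < j → j < p → y i ≠ y j := by
      intro i j hij hj h
      have := hmono i j hij hj
      rw [h] at this
      omega
    have hyinj : ∀ i j : ℕ, i < p → j < p → y i = y j → i = j := by
      intro i j hi hj hij
      by_contra hne
      rcases Nat.lt_or_ge i j with h | h
      · exact hyne i j h hj hij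
      · exact hyne j i (by omega) hi hij.symm
    have hsumy : ∑ t ∈ Finset.range p, (level G (y t) : ℤ) = (totalLevel G : ℤ) := by
      rw [sum_range_comp_eq (F := fun v => (level G v : ℤ)) hpdef y hyinj]
      unfold totalLevel
      push_cast
      rfl
    have hstep : ∀ t : ℕ, t + 1 < p →
        (G.diam : ℤ) + epsilon G - level G (y t) - level G (y (t + 1))
          ≤ (f (y (t + 1)) : ℤ) - f (y t) := by
      intro t ht
      have hne := hyne t (t + 1) (by omega) ht
      have hr := hf (y t) (y (t + 1)) hne
      have hk := hkey (y t) (y (t + 1))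
      have hm := hmono t (t + 1) (by omega) ht
      omega
    have htel : (f (y (p - 1)) : ℤ) - f (y 0)
        = ∑ t ∈ Finset.range (p - 1), ((f (y (t + 1)) : ℤ) - f (y t)) :=
      (Finset.sum_range_sub (fun t => (f (y t) : ℤ)) (p - 1)).symm
    have hsum_ge : ∑ t ∈ Finset.range (p - 1),
        ((G.diam : ℤ) + epsilon G - level G (y t) - level G (y (t + 1)))
          ≤ (f (y (p - 1)) : ℤ) - f (y 0) := by
      rw [htel]
      apply Finset.sum_le_sum
      intro t ht
      rw [Finset.mem_range] at ht
      exact hstep t (by omega)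
    have hyB1 : ∑ t ∈ Finset.range (p - 1), (level G (y t) : ℤ)
        = (totalLevel G : ℤ) - level G (y (p - 1)) := by
      have := Finset.sum_range_succ (fun t => (level G (y t) : ℤ)) (p - 1)
      rw [hp1] at this
      rw [hsumy] at this
      omega
    have hyB2 : ∑ t ∈ Finset.range (p - 1), (level G (y (t + 1)) : ℤ)
        = (totalLevel G : ℤ) - level G (y 0) := by
      have := Finset.sum_range_succ' (fun t => (level G (y t) : ℤ)) (p - 1)
      rw [hp1] at this
      rw [hsumy] at this
      omega
    have hLHS : ∑ t ∈ Finset.range (p - 1),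
        ((G.diam : ℤ) + epsilon G - level G (y t) - level G (y (t + 1)))
        = ((p : ℤ) - 1) * ((G.diam : ℤ) + epsilon G) - 2 * totalLevel G
          + level G (y 0) + level G (y (p - 1)) := by
      have : ∀ t : ℕ, (G.diam : ℤ) + epsilon G - level G (y t) - level G (y (t + 1))
          = ((G.diam : ℤ) + epsilon G) - ((level G (y t) : ℤ) + level G (y (t + 1))) := by
        intro t; ring
      rw [Finset.sum_congr rfl (fun t _ => this t)]
      rw [Finset.sum_sub_distrib, Finset.sum_const, Finset.card_range, nsmul_eq_mul]
      rw [Finset.sum_add_distrib, hyB1, hyB2]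
      have hpc : ((p - 1 : ℕ) : ℤ) = (p : ℤ) - 1 := by
        push_cast [Nat.cast_sub (by omega : 1 ≤ p)]; ring
      rw [hpc]
      ring
    have hends : (epsilon G : ℤ) ≤ level G (y 0) + level G (y (p - 1)) := by
      rcases heps01 with he | he
      · rw [he]
        norm_num
        positivity
      · rw [he]
        exact hlev1 he (y 0) (y (p - 1)) (hyne 0 (p - 1) (by omega) (by omega))
    have hspanf : ((f (y (p - 1)) : ℤ) - f (y 0)).natAbs ≤ span f :=
      Finset.le_sup (f := fun q : V × V => ((f q.1 : ℤ) - (f q.2 : ℤ)).natAbs)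
        (Finset.mem_univ ((y (p - 1), y 0) : V × V))
    have hmon0 : f (y 0) < f (y (p - 1)) := hmono 0 (p - 1) (by omega) (by omega)
    rw [hLHS] at hsum_ge
    have : (f (y (p - 1)) : ℤ) - f (y 0) ≤ (span f : ℤ) := by omega
    linarith
  -- conclusion
  have hmemS : radioNumber G ∈ { n | ∃ f : V → ℕ, IsRadioLabeling G f ∧ span f = n } := by
    apply Nat.sInf_mem
    exact ⟨span f0, f0, hrad, rfl⟩
  obtain ⟨f1, hf1, hsp1⟩ := hmemS
  have h1 : radioNumber G ≤ span f0 := Nat.sInf_le ⟨f0, hrad, rfl⟩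
  have h2 := hlow f1 hf1
  have h3 : (radioNumber G : ℤ) ≤ ((p : ℤ) - 1) * ((G.diam : ℤ) + epsilon G)
      - 2 * totalLevel G + epsilon G := by
    rw [← hval, ← hspan]
    exact_mod_cast h1
  have h4 : ((p : ℤ) - 1) * ((G.diam : ℤ) + epsilon G) - 2 * totalLevel G + epsilon G
      ≤ (radioNumber G : ℤ) := by
    rw [← hsp1]
    exact_mod_cast h2
  linarith

end Radio
end
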